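/- arXiv:2106.15949 — 3 statements merged into one kernel-verified Lean document; each statement's English description precedes it below -/
import Mathlib

section
/- Let 1/2 ≤ α < 1, let Σ be a subset of the strip α < Re z < 1 having no accumulation points at finite distance (i.e. Σ is discrete and closed in ℂ), and let m : Σ → ℤ \ {0} be an arbitrary function. Then there exists a meromorphic function g on the half-plane Re z > α whose set of poles coincides with Σ, all of whose poles are simple with residue Res_{z} g = m(z) for each z ∈ Σ, and which satisfies sup_{Re z > 1} |z|² |g(z)| < ∞. -/
set_option maxHeartbeats 1000000

open Complex Filter Topology Set

namespace MLaux

noncomputable def c (α : ℝ) (s : ℂ) : ℝ := 2 * (s.re - α)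

noncomputable def b (α : ℝ) (s : ℂ) : ℂ := s - (c α s : ℂ)

noncomputable def r (α : ℝ) (s : ℂ) : ℝ := c α s / ((1 - s.re) + c α s)

noncomputable def T (α : ℝ) (m : ℂ → ℤ) (k : ℂ → ℕ) (s z : ℂ) : ℂ :=
  (m s : ℂ) * ((c α s : ℂ) / (z - b α s)) ^ (k s) * (z - s)⁻¹

variable {α : ℝ} {m : ℂ → ℤ} {k : ℂ → ℕ} {s z : ℂ}

lemma re_le_norm (z : ℂ) : z.re ≤ ‖z‖ := by
  exact Complex.re_le_norm z

lemma abs_im_le_norm (z : ℂ) : |z.im| ≤ ‖z‖ := by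
  exact Complex.abs_im_le_norm z

lemma b_re (α : ℝ) (s : ℂ) : (b α s).re = 2 * α - s.re := by
  simp [b, c]; ring

lemma b_im (α : ℝ) (s : ℂ) : (b α s).im = s.im := by simp [b]

lemma c_pos (hs : α < s.re) : 0 < c α s := by simp [c]; linarith

lemma c_le_one (hα : 1 / 2 ≤ α) (hs1 : s.re < 1) : c α s ≤ 1 := by
  simp only [c]; linarith

lemma r_nonneg (hs : α < s.re) (hs1 : s.re < 1) : 0 ≤ r α s := by
  have h1 := c_pos hs
  have h2 : 0 < (1 - s.re) + c α s := by linarith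
  exact div_nonneg h1.le h2.le

lemma r_lt_one (hs : α < s.re) (hs1 : s.re < 1) : r α s < 1 := by
  have h1 := c_pos hs
  rw [r, div_lt_one (by linarith)]
  linarith

lemma norm_T (hc : 0 ≤ c α s) :
    ‖T α m k s z‖ = |(m s : ℝ)| * (c α s / ‖z - b α s‖) ^ (k s) * ‖z - s‖⁻¹ := by
  simp only [T, norm_mul, norm_pow, norm_div, norm_inv]
  congr 2
  · rw [show ((m s : ℂ)) = ((m s : ℝ) : ℂ) by push_cast; rfl, Complex.norm_real,
      Real.norm_eq_abs]
  · rw [Complex.norm_real, Real.norm_eq_abs, _root_.abs_of_nonneg hc]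

lemma norm_T_le_far (hα : 1 / 2 ≤ α) (hs : α < s.re) (hs1 : s.re < 1)
    (hz : 2 ≤ |z.im - s.im|) :
    ‖T α m k s z‖ ≤ |(m s : ℝ)| * (1 / 2 : ℝ) ^ (k s) := by
  have hc := c_pos hs
  have hc1 := c_le_one hα hs1
  have him : |z.im - s.im| ≤ ‖z - s‖ := by
    have := abs_im_le_norm (z - s); simpa [Complex.sub_im] using this
  have himb : |z.im - s.im| ≤ ‖z - b α s‖ := by
    have := abs_im_le_norm (z - b α s); rw [Complex.sub_im, b_im] at this; exact this
  have hzs : 2 ≤ ‖z - s‖ := le_trans hz him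
  have hzb : 2 ≤ ‖z - b α s‖ := le_trans hz himb
  have hq : c α s / ‖z - b α s‖ ≤ 1 / 2 := by
    rw [div_le_div_iff₀ (by linarith) (by norm_num)]
    linarith
  have hqn : 0 ≤ c α s / ‖z - b α s‖ := by positivity
  rw [norm_T hc.le]
  have h1 : (c α s / ‖z - b α s‖) ^ k s ≤ (1 / 2 : ℝ) ^ k s := pow_le_pow_left₀ hqn hq _
  have h2 : ‖z - s‖⁻¹ ≤ 1 := by
    rw [inv_le_one_iff₀]; right; linarith
  calc |(m s : ℝ)| * (c α s / ‖z - b α s‖) ^ k s * ‖z - s‖⁻¹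
      ≤ |(m s : ℝ)| * (1 / 2 : ℝ) ^ k s * 1 := by
        apply mul_le_mul (mul_le_mul le_rfl h1 (by positivity) (abs_nonneg _)) h2
          (by positivity) (by positivity)
    _ = |(m s : ℝ)| * (1 / 2 : ℝ) ^ k s := mul_one _

lemma norm_T_le_right (hα : 1 / 2 ≤ α) (hs : α < s.re) (hs1 : s.re < 1) (hk : 2 ≤ k s)
    (hz : 1 < z.re) :
    ‖z‖ ^ 2 * ‖T α m k s z‖ ≤
      |(m s : ℝ)| * ((2 + 2 * ‖b α s‖ ^ 2) / (1 - s.re)) * r α s ^ (k s - 2) := by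
  have hc := c_pos hs
  have hc1 := c_le_one hα hs1
  have hD1 : (1 - s.re) + c α s ≤ ‖z - b α s‖ := by
    have h := re_le_norm (z - b α s)
    rw [Complex.sub_re, b_re] at h
    simp only [c] at *
    linarith
  have hDpos : (0:ℝ) < ‖z - b α s‖ := lt_of_lt_of_le (by linarith) hD1
  have hq : c α s / ‖z - b α s‖ ≤ r α s := by
    rw [r]; gcongr
  have hq1 : c α s / ‖z - b α s‖ ≤ 1 := hq.trans (r_lt_one hs hs1).le
  have hq0 : 0 ≤ c α s / ‖z - b α s‖ := by positivity
  have hzs : 1 - s.re ≤ ‖z - s‖ := by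
    have h := re_le_norm (z - s); rw [Complex.sub_re] at h; linarith
  have hσ : (0:ℝ) < 1 - s.re := by linarith
  have hinv : ‖z - s‖⁻¹ ≤ (1 - s.re)⁻¹ := by gcongr
  have hzD : ‖z‖ ≤ ‖z - b α s‖ + ‖b α s‖ := by
    simpa using norm_add_le (z - b α s) (b α s)
  have hz2 : ‖z‖ ^ 2 ≤ 2 * ‖z - b α s‖ ^ 2 + 2 * ‖b α s‖ ^ 2 := by
    nlinarith [sq_nonneg (‖z - b α s‖ - ‖b α s‖), norm_nonneg z,
      norm_nonneg (z - b α s), norm_nonneg (b α s)]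
  have hcd : (c α s / ‖z - b α s‖) ^ 2 * ‖z - b α s‖ ^ 2 = (c α s) ^ 2 := by
    rw [div_pow, div_mul_cancel₀]
    exact pow_ne_zero _ hDpos.ne'
  have hq2 : (c α s / ‖z - b α s‖) ^ 2 ≤ 1 := by nlinarith
  have hc2 : (c α s) ^ 2 ≤ 1 := by nlinarith
  have hkey : (c α s / ‖z - b α s‖) ^ 2 * ‖z‖ ^ 2 ≤ 2 + 2 * ‖b α s‖ ^ 2 := by
    nlinarith [mul_le_mul_of_nonneg_left hz2 (sq_nonneg (c α s / ‖z - b α s‖)),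
      mul_le_mul_of_nonneg_right hq2 (sq_nonneg (‖b α s‖))]
  rw [norm_T hc.le]
  have hpow : (c α s / ‖z - b α s‖) ^ k s
      = (c α s / ‖z - b α s‖) ^ (k s - 2) * (c α s / ‖z - b α s‖) ^ 2 := by
    rw [← pow_add]; congr 1; omega
  have hrn : 0 ≤ r α s := r_nonneg hs hs1
  have h1 : (c α s / ‖z - b α s‖) ^ (k s - 2) ≤ r α s ^ (k s - 2) := pow_le_pow_left₀ hq0 hq _
  calc ‖z‖ ^ 2 * (|(m s : ℝ)| * (c α s / ‖z - b α s‖) ^ k s * ‖z - s‖⁻¹)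
      = |(m s : ℝ)| * (c α s / ‖z - b α s‖) ^ (k s - 2)
          * ((c α s / ‖z - b α s‖) ^ 2 * ‖z‖ ^ 2) * ‖z - s‖⁻¹ := by
        rw [hpow]; ring
    _ ≤ |(m s : ℝ)| * r α s ^ (k s - 2) * (2 + 2 * ‖b α s‖ ^ 2) * (1 - s.re)⁻¹ := by
        apply mul_le_mul ?g1 hinv (by positivity) (by positivity)
        apply mul_le_mul (mul_le_mul le_rfl h1 (by positivity) (abs_nonneg _)) hkey
          (by positivity) (by positivity)
    _ = |(m s : ℝ)| * ((2 + 2 * ‖b α s‖ ^ 2) / (1 - s.re)) * r α s ^ (k s - 2) := by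
        field_simp

lemma T_sub_mul (hzs : z ≠ s) :
    (z - s) * T α m k s z = (m s : ℂ) * ((c α s : ℂ) / (z - b α s)) ^ (k s) := by
  have h : z - s ≠ 0 := sub_ne_zero.2 hzs
  calc (z - s) * T α m k s z
      = (m s : ℂ) * ((c α s : ℂ) / (z - b α s)) ^ (k s) * ((z - s) * (z - s)⁻¹) := by
        rw [T]; ring
    _ = (m s : ℂ) * ((c α s : ℂ) / (z - b α s)) ^ (k s) := by
        rw [mul_inv_cancel₀ h, mul_one]

lemma T_differentiableAt (hzb : z ≠ b α s) (hzs : z ≠ s) :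
    DifferentiableAt ℂ (T α m k s) z := by
  have h1 : z - b α s ≠ 0 := sub_ne_zero.2 hzb
  have h2 : z - s ≠ 0 := sub_ne_zero.2 hzs
  have d1 : DifferentiableAt ℂ (fun w : ℂ => ((c α s : ℝ) : ℂ) / (w - b α s)) z :=
    DifferentiableAt.div (differentiableAt_const _)
      (differentiableAt_id.sub_const _) h1
  have d2 : DifferentiableAt ℂ (fun w : ℂ => (w - s)⁻¹) z :=
    DifferentiableAt.inv (differentiableAt_id.sub_const _) h2
  exact DifferentiableAt.mul (DifferentiableAt.mul (differentiableAt_const _) (d1.pow _)) d2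

lemma T_meromorphicAt (x : ℂ) : MeromorphicAt (T α m k s) x := by
  have h1 : MeromorphicAt (fun w : ℂ => w - b α s) x :=
    (MeromorphicAt.id x).sub (MeromorphicAt.const _ x)
  have h2 : MeromorphicAt (fun w : ℂ => w - s) x :=
    (MeromorphicAt.id x).sub (MeromorphicAt.const _ x)
  have h3 : MeromorphicAt (fun w : ℂ => ((c α s : ℝ) : ℂ) / (w - b α s)) x :=
    (MeromorphicAt.const _ x).div h1
  have h4 : MeromorphicAt (fun w : ℂ => (((c α s : ℝ) : ℂ) / (w - b α s)) ^ (k s)) x := h3.pow _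
  have h5 : MeromorphicAt (fun w : ℂ => (w - s)⁻¹) x := h2.inv
  exact ((MeromorphicAt.const ((m s : ℂ)) x).mul h4).mul h5

lemma T_tendsto (hs : α < s.re) :
    Tendsto (fun w => (w - s) * T α m k s w) (𝓝[≠] s) (𝓝 ((m s : ℤ) : ℂ)) := by
  have hc := c_pos hs
  have hsb : s - b α s = ((c α s : ℝ) : ℂ) := by simp [b]
  have hcne : ((c α s : ℝ) : ℂ) ≠ 0 := by exact_mod_cast hc.ne'
  have hne : s - b α s ≠ 0 := by rw [hsb]; exact hcne
  have hcont : ContinuousAt (fun w => (m s : ℂ) * (((c α s : ℝ) : ℂ) / (w - b α s)) ^ (k s)) s := by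
    apply ContinuousAt.mul continuousAt_const
    exact (continuousAt_const.div (continuousAt_id.sub continuousAt_const) hne).pow _
  have hval : (m s : ℂ) * (((c α s : ℝ) : ℂ) / (s - b α s)) ^ (k s) = (m s : ℂ) := by
    rw [hsb, div_self hcne, one_pow, mul_one]
  have h2 := hcont.tendsto
  rw [hval] at h2
  refine Tendsto.congr' ?_ (h2.mono_left nhdsWithin_le_nhds)
  filter_upwards [self_mem_nhdsWithin] with w hw
  exact (T_sub_mul hw).symm

end MLaux

/-- Lemma 3: for `1/2 ≤ α < 1`, a set `Σ` in the strip `α < Re z < 1` with no finite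
accumulation points, and `m : Σ → ℤ \ {0}`, there is a meromorphic function `g` on
`Re z > α` whose poles are exactly `Σ`, all simple with residue `m(z)` at `z ∈ Σ`, and with
`sup_{Re z > 1} |z|² |g(z)| < ∞`. -/
theorem exists_meromorphic_with_simple_poles (α : ℝ) (hα : 1 / 2 ≤ α) (hα1 : α < 1)
    (S : Set ℂ) (hS : S ⊆ {z : ℂ | α < z.re ∧ z.re < 1})
    (hacc : ∀ z : ℂ, ¬ AccPt z (𝓟 S))
    (m : ℂ → ℤ) (hm : ∀ z ∈ S, m z ≠ 0) :
    ∃ g : ℂ → ℂ, MeromorphicOn g {z : ℂ | α < z.re} ∧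
      (∀ z ∈ {z : ℂ | α < z.re} \ S, AnalyticAt ℂ g z) ∧
      (∀ z ∈ S, Tendsto (fun w => (w - z) * g w) (𝓝[≠] z) (𝓝 ((m z : ℤ) : ℂ))) ∧
      ∃ C : ℝ, ∀ z : ℂ, 1 < z.re → ‖z‖ ^ 2 * ‖g z‖ ≤ C := by
  classical
  -- Finiteness of horizontal bands of S
  have hfin : ∀ R : ℝ, {s | s ∈ S ∧ |s.im| ≤ R}.Finite := by
    intro R
    by_contra hinf
    rw [← Set.not_infinite, not_not] at hinf
    have hsub : {s | s ∈ S ∧ |s.im| ≤ R} ⊆ Metric.closedBall (0 : ℂ) (R + 1) := by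
      intro s hs
      obtain ⟨hs1, hs2⟩ := hS hs.1
      rw [Metric.mem_closedBall, dist_zero_right]
      have h1 : ‖s‖ ≤ |s.re| + |s.im| := by
        exact Complex.norm_le_abs_re_add_abs_im s
      have h2 : |s.re| ≤ 1 := by rw [abs_le]; constructor <;> linarith
      linarith [hs.2]
    obtain ⟨x, -, hx⟩ := hinf.exists_accPt_of_subset_isCompact
      (isCompact_closedBall (0 : ℂ) (R + 1)) hsub
    exact hacc x (hx.mono (principal_mono.2 fun s hs => hs.1))
  have hcount : S.Countable := by
    have hsub : S ⊆ ⋃ n : ℕ, {s | s ∈ S ∧ |s.im| ≤ (n : ℝ)} := by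
      intro s hs
      exact Set.mem_iUnion.2 ⟨⌈|s.im|⌉₊, hs, Nat.le_ceil _⟩
    exact (Set.countable_iUnion fun n : ℕ => (hfin n).countable).mono hsub
  haveI : Countable ↥S := hcount.to_subtype
  obtain ⟨emb, hemb⟩ := Countable.exists_injective_nat ↥S
  set ι : ℂ → ℕ := fun z => if h : z ∈ S then emb ⟨z, h⟩ else 0 with hιdef
  set u : ℂ → ℝ := fun z => (1 / 2 : ℝ) ^ (ι z) with hudef
  have hu_pos : ∀ z, 0 < u z := fun z => by positivity
  have hι_inj : Function.Injective (fun s : ↥S => ι (s : ℂ)) := by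
    intro a b hab
    simp only [hιdef, dif_pos a.2, dif_pos b.2, Subtype.coe_eta] at hab
    exact hemb hab
  have hu_sum : Summable (fun s : ↥S => u (s : ℂ)) := by
    have hg : Summable (fun n : ℕ => (1 / 2 : ℝ) ^ n) :=
      summable_geometric_of_lt_one (by norm_num) (by norm_num)
    have h2 := hg.comp_injective hι_inj
    exact h2
  -- coefficients
  set A : ℂ → ℝ := fun s => |(m s : ℝ)| * (1 + (2 + 2 * ‖MLaux.b α s‖ ^ 2) / (1 - s.re))
    with hAdef
  set ρ : ℂ → ℝ := fun s => max (MLaux.r α s) (1 / 2) with hρdef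
  have hA_facts : ∀ s ∈ S, |(m s : ℝ)| ≤ A s ∧
      |(m s : ℝ)| * ((2 + 2 * ‖MLaux.b α s‖ ^ 2) / (1 - s.re)) ≤ A s ∧ 0 < A s := by
    intro s hs
    obtain ⟨hs1, hs2⟩ := hS hs
    have hm1 : (1 : ℝ) ≤ |(m s : ℝ)| := by
      have h := Int.one_le_abs (hm s hs)
      calc (1:ℝ) = ((1:ℤ):ℝ) := by norm_num
        _ ≤ ((|m s| : ℤ) : ℝ) := by exact_mod_cast h
        _ = |(m s : ℝ)| := by push_cast; ring
    have hd : 0 ≤ (2 + 2 * ‖MLaux.b α s‖ ^ 2) / (1 - s.re) :=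
      div_nonneg (by positivity) (by linarith)
    refine ⟨?_, ?_, ?_⟩ <;> rw [hAdef] <;> nlinarith
  have hρ_facts : ∀ s ∈ S, (1/2 : ℝ) ≤ ρ s ∧ 0 ≤ ρ s ∧ ρ s < 1 ∧ MLaux.r α s ≤ ρ s := by
    intro s hs
    obtain ⟨hs1, hs2⟩ := hS hs
    exact ⟨le_max_right _ _, le_trans (by norm_num) (le_max_right _ _),
      max_lt (MLaux.r_lt_one hs1 hs2) (by norm_num), le_max_left _ _⟩
  have hchoice : ∀ s : ℂ, ∃ n : ℕ, s ∈ S → A s * ρ s ^ n ≤ u s := by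
    intro s
    by_cases hs : s ∈ S
    · obtain ⟨-, -, hApos⟩ := hA_facts s hs
      obtain ⟨-, -, hρ1, -⟩ := hρ_facts s hs
      obtain ⟨n, hn⟩ := exists_pow_lt_of_lt_one (div_pos (hu_pos s) hApos) hρ1
      refine ⟨n, fun _ => ?_⟩
      rw [mul_comm]
      exact (lt_div_iff₀ hApos).1 hn |>.le
    · exact ⟨0, fun h => absurd h hs⟩
  choose nn hnn using hchoice
  set k : ℂ → ℕ := fun s => nn s + 2 with hkdef
  have hk2 : ∀ s, 2 ≤ k s := fun s => by simp [hkdef]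
  set T := MLaux.T α m k with hTdef
  -- Main estimates
  have hE1 : ∀ s ∈ S, ∀ z : ℂ, 2 ≤ |z.im - s.im| → ‖T s z‖ ≤ u s := by
    intro s hs z hz
    obtain ⟨hs1, hs2⟩ := hS hs
    refine (MLaux.norm_T_le_far (k := k) (m := m) hα hs1 hs2 hz).trans ?_
    obtain ⟨hmA, -, hA0⟩ := hA_facts s hs
    obtain ⟨hρh, hρ0, -, -⟩ := hρ_facts s hs
    have hb1 : (1/2 : ℝ) ^ (k s) ≤ ρ s ^ (nn s) := by
      have h1 : (1/2 : ℝ) ^ (k s) ≤ (1/2 : ℝ) ^ (nn s) :=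
        pow_le_pow_of_le_one (by norm_num) (by norm_num) (by simp [hkdef])
      exact h1.trans (pow_le_pow_left₀ (by norm_num) hρh _)
    calc |(m s : ℝ)| * (1/2 : ℝ) ^ (k s) ≤ A s * ρ s ^ (nn s) :=
          mul_le_mul hmA hb1 (by positivity) hA0.le
      _ ≤ u s := hnn s hs
  have hE2 : ∀ s ∈ S, ∀ z : ℂ, 1 < z.re → ‖z‖ ^ 2 * ‖T s z‖ ≤ u s := by
    intro s hs z hz
    obtain ⟨hs1, hs2⟩ := hS hs
    refine (MLaux.norm_T_le_right (k := k) (m := m) hα hs1 hs2 (hk2 s) hz).trans ?_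
    obtain ⟨-, hmA, hA0⟩ := hA_facts s hs
    obtain ⟨-, hρ0, -, hrρ⟩ := hρ_facts s hs
    have hpow : MLaux.r α s ^ (k s - 2) ≤ ρ s ^ (nn s) := by
      have e : k s - 2 = nn s := by simp [hkdef]
      rw [e]
      exact pow_le_pow_left₀ (MLaux.r_nonneg hs1 hs2) hrρ _
    calc |(m s : ℝ)| * ((2 + 2 * ‖MLaux.b α s‖ ^ 2) / (1 - s.re)) * MLaux.r α s ^ (k s - 2)
        ≤ A s * ρ s ^ (nn s) :=
          mul_le_mul hmA hpow (pow_nonneg (MLaux.r_nonneg hs1 hs2) _) hA0.le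
      _ ≤ u s := hnn s hs
  -- definition of g
  set g : ℂ → ℂ := fun z => ∑' s : ↥S, T (s : ℂ) z with hgdef
  have hSfin : ∀ R : ℝ, {s : ↥S | |(s : ℂ).im| ≤ R}.Finite := by
    intro R
    have h1 : {s : ↥S | |(s : ℂ).im| ≤ R}
        = (Subtype.val : ↥S → ℂ) ⁻¹' {s | s ∈ S ∧ |s.im| ≤ R} := by
      ext s; simp [s.2]
    rw [h1]
    exact (hfin R).preimage Subtype.val_injective.injOn
  have hsummable : ∀ z : ℂ, Summable (fun s : ↥S => T (s : ℂ) z) := by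
    intro z
    apply Summable.of_norm_bounded_eventually (g := fun s : ↥S => u (s : ℂ)) hu_sum
    rw [Filter.eventually_cofinite]
    apply Set.Finite.subset (hSfin (|z.im| + 2))
    intro s hs
    simp only [Set.mem_setOf_eq] at hs ⊢
    by_contra hcon
    push_neg at hcon
    apply hs
    apply hE1 _ s.2
    have h1 : |(s : ℂ).im| - |z.im| ≤ |z.im - (s : ℂ).im| := by
      rw [abs_sub_comm]; exact abs_sub_abs_le_abs_sub _ _
    linarith
  have hVopen : ∀ R : ℝ, IsOpen {z : ℂ | α < z.re ∧ |z.im| < R} := by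
    intro R
    have h1 : IsOpen {z : ℂ | α < z.re} := isOpen_lt continuous_const Complex.continuous_re
    have h2 : IsOpen {z : ℂ | |z.im| < R} :=
      isOpen_lt (continuous_abs.comp Complex.continuous_im) continuous_const
    exact h1.and h2
  have hbre : ∀ s ∈ S, (MLaux.b α s).re < α := by
    intro s hs
    obtain ⟨hs1, hs2⟩ := hS hs
    rw [MLaux.b_re]; linarith
  -- master decomposition
  have master : ∀ R : ℝ, ∃ F : Finset ↥S,
      (∀ s : ↥S, |(s : ℂ).im| ≤ R + 2 → s ∈ F) ∧
      DifferentiableOn ℂ (fun z => ∑' t : {t : ↥S // t ∉ F}, T ((t : ↥S) : ℂ) z)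
        {z : ℂ | α < z.re ∧ |z.im| < R} ∧
      (∀ z : ℂ, g z = (∑ t ∈ F, T ((t : ↥S) : ℂ) z)
        + ∑' t : {t : ↥S // t ∉ F}, T ((t : ↥S) : ℂ) z) := by
    intro R
    refine ⟨(hSfin (R + 2)).toFinset, fun s hs => (hSfin (R + 2)).mem_toFinset.2 hs, ?_, ?_⟩
    · have hfar : ∀ t : {t : ↥S // t ∉ (hSfin (R + 2)).toFinset}, R + 2 < |((t : ↥S) : ℂ).im| := by
        intro t
        have := t.2
        rw [(hSfin (R + 2)).mem_toFinset] at this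
        simpa [Set.mem_setOf_eq, not_le] using this
      apply differentiableOn_tsum_of_summable_norm
        (hu_sum.comp_injective (Subtype.val_injective : Function.Injective
          (Subtype.val : {t : ↥S // t ∉ (hSfin (R + 2)).toFinset} → ↥S)))
      · intro t z hz
        obtain ⟨hz1, hz2⟩ := hz
        apply DifferentiableAt.differentiableWithinAt
        apply MLaux.T_differentiableAt
        · intro he
          rw [he] at hz1
          exact absurd hz1 (not_lt.2 (hbre _ (t : ↥S).2).le)
        · intro he
          rw [he] at hz2
          linarith [hfar t]
      · exact hVopen R
      · intro t w hw
        obtain ⟨hw1, hw2⟩ := hw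
        apply hE1 _ (t : ↥S).2
        have h1 : |((t : ↥S) : ℂ).im| - |w.im| ≤ |w.im - ((t : ↥S) : ℂ).im| := by
          rw [abs_sub_comm]; exact abs_sub_abs_le_abs_sub _ _
        linarith [hfar t]
    · intro z
      rw [hgdef]
      exact (Summable.sum_add_tsum_subtype_compl (hsummable z) _).symm
  -- analyticity away from S
  have hanalytic : ∀ z₀ ∈ {z : ℂ | α < z.re} \ S, AnalyticAt ℂ g z₀ := by
    rintro z₀ ⟨hz₀re, hz₀S⟩
    obtain ⟨F, hFmem, hFdiff, hFeq⟩ := master (|z₀.im| + 1)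
    set W := {z : ℂ | α < z.re ∧ |z.im| < |z₀.im| + 1}
      \ (↑(F.image (Subtype.val)) : Set ℂ) with hWdef
    have hWopen : IsOpen W :=
      (hVopen _).sdiff (F.image Subtype.val).finite_toSet.isClosed
    have hz₀W : z₀ ∈ W := by
      refine ⟨⟨hz₀re, by linarith [abs_nonneg z₀.im]⟩, ?_⟩
      intro hmem
      simp only [Finset.coe_image, Set.mem_image, Finset.mem_coe] at hmem
      obtain ⟨t, -, rfl⟩ := hmem
      exact hz₀S t.2
    have hd : DifferentiableOn ℂ
        (fun z => (∑ t ∈ F, T ((t : ↥S) : ℂ) z)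
          + ∑' t : {t : ↥S // t ∉ F}, T ((t : ↥S) : ℂ) z) W := by
      apply DifferentiableOn.add
      · apply DifferentiableOn.fun_sum
        intro t ht z hz
        apply DifferentiableAt.differentiableWithinAt
        apply MLaux.T_differentiableAt
        · intro he
          have := hz.1.1
          rw [he] at this
          exact absurd this (not_lt.2 (hbre _ t.2).le)
        · intro he
          exact hz.2 (by
            rw [he]
            exact Finset.mem_coe.2 (Finset.mem_image.2 ⟨t, ht, rfl⟩))
      · exact hFdiff.mono Set.diff_subset
    have hdiff : DifferentiableOn ℂ g W := hd.congr fun z _ => hFeq z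
    exact hdiff.analyticAt (hWopen.mem_nhds hz₀W)
  -- residues
  have hres : ∀ s₀ ∈ S, Tendsto (fun w => (w - s₀) * g w) (𝓝[≠] s₀) (𝓝 ((m s₀ : ℤ) : ℂ)) := by
    intro s₀ hs₀
    obtain ⟨hs₀1, hs₀2⟩ := hS hs₀
    obtain ⟨F, hFmem, hFdiff, hFeq⟩ := master (|s₀.im| + 1)
    set s₀' : ↥S := ⟨s₀, hs₀⟩ with hs₀'def
    have hs₀F : s₀' ∈ F := hFmem _ (by simp [hs₀'def]; linarith [abs_nonneg s₀.im])
    set h : ℂ → ℂ := fun w => (∑ t ∈ F.erase s₀', T ((t : ↥S) : ℂ) w)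
      + ∑' t : {t : ↥S // t ∉ F}, T ((t : ↥S) : ℂ) w with hhdef
    have hgTh : ∀ w, g w = T s₀ w + h w := by
      intro w
      rw [hFeq w, ← Finset.add_sum_erase _ _ hs₀F, hhdef]
      simp only [hs₀'def]
      ring
    have hconth : ContinuousAt h s₀ := by
      apply ContinuousAt.add
      · apply tendsto_finset_sum
        intro t ht
        have htne : s₀ ≠ ((t : ↥S) : ℂ) := by
          intro he
          exact (Finset.ne_of_mem_erase ht) (Subtype.ext he.symm)
        have hbne : s₀ ≠ MLaux.b α ((t : ↥S) : ℂ) := by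
          intro he
          have hlt := hbre _ (t : ↥S).2
          rw [← he] at hlt
          linarith
        exact (MLaux.T_differentiableAt hbne htne).continuousAt
      · have hs₀V : s₀ ∈ {z : ℂ | α < z.re ∧ |z.im| < |s₀.im| + 1} :=
          ⟨hs₀1, by linarith [abs_nonneg s₀.im]⟩
        exact (hFdiff.differentiableAt ((hVopen _).mem_nhds hs₀V)).continuousAt
    have hT := MLaux.T_tendsto (m := m) (k := k) hs₀1
    have hh : Tendsto (fun w => (w - s₀) * h w) (𝓝[≠] s₀) (𝓝 0) := by
      have hc : Tendsto (fun w => (w - s₀) * h w) (𝓝 s₀) (𝓝 ((s₀ - s₀) * h s₀)) :=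
        ((continuousAt_id.sub continuousAt_const).mul hconth)
      simpa using hc.mono_left nhdsWithin_le_nhds
    have hcomb := hT.add hh
    rw [add_zero] at hcomb
    apply hcomb.congr
    intro w
    rw [hgTh w]
    ring
  -- meromorphy
  have hmero : MeromorphicOn g {z : ℂ | α < z.re} := by
    intro z₀ hz₀
    by_cases hz₀S : z₀ ∈ S
    · obtain ⟨F, hFmem, hFdiff, hFeq⟩ := master (|z₀.im| + 1)
      have hz₀V : z₀ ∈ {z : ℂ | α < z.re ∧ |z.im| < |z₀.im| + 1} :=
        ⟨hz₀, by linarith [abs_nonneg z₀.im]⟩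
      have htail : MeromorphicAt (fun z => ∑' t : {t : ↥S // t ∉ F}, T ((t : ↥S) : ℂ) z) z₀ :=
        (hFdiff.analyticAt ((hVopen _).mem_nhds hz₀V)).meromorphicAt
      have hsum : ∀ G : Finset ↥S, MeromorphicAt (fun z => ∑ t ∈ G, T ((t : ↥S) : ℂ) z) z₀ := by
        intro G
        induction G using Finset.induction_on with
        | empty => simpa using MeromorphicAt.const (0 : ℂ) z₀
        | insert a G' ha ih =>
          have h1 := (MLaux.T_meromorphicAt (α := α) (m := m) (k := k)
            (s := ((a : ↥S) : ℂ)) z₀).add ih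
          have h2 : (fun z => ∑ t ∈ insert a G', T ((t : ↥S) : ℂ) z)
              = fun z => T ((a : ↥S) : ℂ) z + ∑ t ∈ G', T ((t : ↥S) : ℂ) z := by
            funext z
            rw [Finset.sum_insert ha]
          rw [h2]
          exact h1
      have hco := (hsum F).add htail
      apply hco.congr
      exact Filter.Eventually.of_forall fun z => (hFeq z).symm
    · exact (hanalytic z₀ ⟨hz₀, hz₀S⟩).meromorphicAt
  -- conclusion
  refine ⟨g, hmero, hanalytic, hres, ⟨∑' s : ↥S, u (s : ℂ), ?_⟩⟩
  intro z hz
  have h1 : (1 : ℝ) ≤ ‖z‖ := le_trans (by linarith) (MLaux.re_le_norm z)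
  have hTu : ∀ s : ↥S, ‖T (s : ℂ) z‖ ≤ u (s : ℂ) := by
    intro s
    have h := hE2 _ s.2 z hz
    have h2 : (1 : ℝ) ≤ ‖z‖ ^ 2 := by nlinarith
    nlinarith [mul_le_mul_of_nonneg_right h2 (norm_nonneg (T (s : ℂ) z))]
  have hsn : Summable (fun s : ↥S => ‖T (s : ℂ) z‖) :=
    Summable.of_nonneg_of_le (fun s => norm_nonneg _) hTu hu_sum
  calc ‖z‖ ^ 2 * ‖g z‖ ≤ ‖z‖ ^ 2 * ∑' s : ↥S, ‖T (s : ℂ) z‖ :=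
        mul_le_mul_of_nonneg_left (norm_tsum_le_tsum_norm hsn) (by positivity)
    _ = ∑' s : ↥S, ‖z‖ ^ 2 * ‖T (s : ℂ) z‖ := tsum_mul_left.symm
    _ ≤ ∑' s : ↥S, u (s : ℂ) :=
        Summable.tsum_le_tsum (fun s => hE2 _ s.2 z hz) (hsn.mul_left _) hu_sum
end

section
/- Let q : [1, ∞) → ℂ be bounded and measurable, let 𝒫 be a set of primes, let χ : 𝒫 → ℂ with |χ(p)| = 1 for all p ∈ 𝒫, and set r(x) = ∫₁^x q(y) dy − Σ_{p ≤ x, p ∈ 𝒫} χ(p) log p. Define the sequence x₀ = 2, x_{j+1} = x_j + x_j^{21/40}. If r(x_j) = O(x_j^{21/40} log x_j) as j → ∞, then r(x) = O(x^{21/40} log x) as x → ∞. -/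
open Complex Filter Topology Set MeasureTheory

open scoped Classical in
/-- If `r(x) = ∫₁^x q(y) dy − ∑_{p ≤ x, p ∈ P} χ(p) log p` (with `q` bounded measurable and
`|χ(p)| = 1` on the prime set `P`), and `r(x_j) = O(x_j^{21/40} log x_j)` along the sequence
`x₀ = 2`, `x_{j+1} = x_j + x_j^{21/40}`, then `r(x) = O(x^{21/40} log x)` as `x → ∞`. -/
theorem bigO_on_sequence_implies_bigO (q : ℝ → ℂ)
    (hqb : ∃ M : ℝ, ∀ x : ℝ, ‖q x‖ ≤ M) (hqm : Measurable q)
    (P : Set ℕ) (hP : ∀ p ∈ P, p.Prime)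
    (χ : ℕ → ℂ) (hχ : ∀ p ∈ P, ‖χ p‖ = 1)
    (r : ℝ → ℂ)
    (hr : ∀ x : ℝ, r x = (∫ y in Ioc (1 : ℝ) x, q y) -
      ∑ p ∈ Finset.filter (fun p => p.Prime ∧ p ∈ P) (Finset.Iic ⌊x⌋₊),
        χ p * (Real.log p : ℂ))
    (x : ℕ → ℝ) (hx0 : x 0 = 2)
    (hxsucc : ∀ j : ℕ, x (j + 1) = x j + x j ^ ((21 : ℝ) / 40))
    (hOseq : (fun j : ℕ => r (x j)) =O[atTop]
      fun j : ℕ => x j ^ ((21 : ℝ) / 40) * Real.log (x j)) :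
    r =O[atTop] fun y : ℝ => y ^ ((21 : ℝ) / 40) * Real.log y := by
  obtain ⟨M, hM⟩ := hqb
  have hM0 : 0 ≤ M := le_trans (norm_nonneg _) (hM 0)
  have hθ0 : (0:ℝ) ≤ 21/40 := by norm_num
  -- basic facts about the sequence
  have hx2 : ∀ j, 2 ≤ x j := by
    intro j
    induction j with
    | zero => rw [hx0]
    | succ n ih =>
      rw [hxsucc]
      nlinarith [Real.rpow_nonneg (by linarith : (0:ℝ) ≤ x n) ((21:ℝ)/40)]
  have hpow1 : ∀ j, (1:ℝ) ≤ x j ^ ((21:ℝ)/40) := by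
    intro j
    calc (1:ℝ) = x j ^ (0:ℝ) := (Real.rpow_zero _).symm
    _ ≤ x j ^ ((21:ℝ)/40) :=
        Real.rpow_le_rpow_of_exponent_le (by linarith [hx2 j]) hθ0
  have hgrow : ∀ j : ℕ, 2 + (j:ℝ) ≤ x j := by
    intro j
    induction j with
    | zero => simp [hx0]
    | succ n ih =>
      rw [hxsucc]
      push_cast
      nlinarith [hpow1 n]
  have htend : Tendsto x atTop atTop :=
    tendsto_atTop_mono hgrow
      (tendsto_atTop_add_const_left _ 2 tendsto_natCast_atTop_atTop)
  -- integrability of q on bounded intervals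
  have hint : ∀ a b : ℝ, IntegrableOn q (Ioc a b) := fun a b =>
    Measure.integrableOn_of_bounded measure_Ioc_lt_top.ne
      hqm.aestronglyMeasurable (Eventually.of_forall hM)
  -- the key difference estimate
  have key : ∀ a b : ℝ, 2 ≤ a → a ≤ b →
      ‖r b - r a‖ ≤ M * (b - a) + ((b - a) + 1) * Real.log b := by
    intro a b ha hab
    have h1a : (1:ℝ) ≤ a := by linarith
    have hb2 : (2:ℝ) ≤ b := by linarith
    have hlogb : 0 ≤ Real.log b := Real.log_nonneg (by linarith)
    -- split of the integral
    have hsplit : (∫ y in Ioc (1:ℝ) b, q y) - (∫ y in Ioc (1:ℝ) a, q y)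
        = ∫ y in Ioc a b, q y := by
      have hdisj : Disjoint (Ioc (1:ℝ) a) (Ioc a b) := by
        rw [Set.Ioc_disjoint_Ioc]
        exact min_le_of_left_le (le_max_right _ _)
      rw [← Set.Ioc_union_Ioc_eq_Ioc h1a hab,
        setIntegral_union hdisj measurableSet_Ioc (hint 1 a) (hint a b)]
      ring
    -- split of the sum
    have hsub : Finset.filter (fun p => p.Prime ∧ p ∈ P) (Finset.Iic ⌊a⌋₊)
        ⊆ Finset.filter (fun p => p.Prime ∧ p ∈ P) (Finset.Iic ⌊b⌋₊) :=
      Finset.filter_subset_filter _ (Finset.Iic_subset_Iic.mpr (Nat.floor_mono hab))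
    have hsdiff : Finset.filter (fun p => p.Prime ∧ p ∈ P) (Finset.Iic ⌊b⌋₊)
        \ Finset.filter (fun p => p.Prime ∧ p ∈ P) (Finset.Iic ⌊a⌋₊)
        = Finset.filter (fun p => p.Prime ∧ p ∈ P) (Finset.Ioc ⌊a⌋₊ ⌊b⌋₊) := by
      ext p
      simp only [Finset.mem_sdiff, Finset.mem_filter, Finset.mem_Iic, Finset.mem_Ioc]
      constructor
      · rintro ⟨⟨hpn, hp⟩, h2⟩
        refine ⟨⟨?_, hpn⟩, hp⟩
        by_contra h
        push_neg at h
        exact h2 ⟨h, hp⟩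
      · rintro ⟨⟨hmp, hpn⟩, hp⟩
        exact ⟨⟨hpn, hp⟩, fun h => by omega⟩
    have hsum : (∑ p ∈ Finset.filter (fun p => p.Prime ∧ p ∈ P) (Finset.Iic ⌊b⌋₊),
          χ p * (Real.log p : ℂ))
        - (∑ p ∈ Finset.filter (fun p => p.Prime ∧ p ∈ P) (Finset.Iic ⌊a⌋₊),
          χ p * (Real.log p : ℂ))
        = ∑ p ∈ Finset.filter (fun p => p.Prime ∧ p ∈ P) (Finset.Ioc ⌊a⌋₊ ⌊b⌋₊),
          χ p * (Real.log p : ℂ) := by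
      rw [← Finset.sum_sdiff_eq_sub hsub, hsdiff]
    -- bound the integral piece
    have hI : ‖∫ y in Ioc a b, q y‖ ≤ M * (b - a) := by
      have := norm_setIntegral_le_of_norm_le_const (μ := volume) (s := Ioc a b)
        measure_Ioc_lt_top (fun y _ => hM y)
      rwa [measureReal_def, Real.volume_Ioc, ENNReal.toReal_ofReal (by linarith)] at this
    -- bound the sum piece
    have hS : ‖∑ p ∈ Finset.filter (fun p => p.Prime ∧ p ∈ P) (Finset.Ioc ⌊a⌋₊ ⌊b⌋₊),
        χ p * (Real.log p : ℂ)‖ ≤ ((b - a) + 1) * Real.log b := by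
      have hterm : ∀ p ∈ Finset.filter (fun p => p.Prime ∧ p ∈ P) (Finset.Ioc ⌊a⌋₊ ⌊b⌋₊),
          ‖χ p * (Real.log p : ℂ)‖ ≤ Real.log b := by
        intro p hp
        simp only [Finset.mem_filter, Finset.mem_Ioc] at hp
        obtain ⟨⟨hap, hpb⟩, hprime, hpP⟩ := hp
        have hp1 : (1:ℝ) ≤ (p:ℝ) := by
          exact_mod_cast hprime.one_lt.le
        have hpleb : (p:ℝ) ≤ b :=
          le_trans (by exact_mod_cast Nat.cast_le.mpr hpb) (Nat.floor_le (by linarith))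
        rw [norm_mul, hχ p hpP, one_mul, Complex.norm_real, Real.norm_eq_abs,
          _root_.abs_of_nonneg (Real.log_nonneg hp1)]
        exact Real.log_le_log (by linarith) hpleb
      have hcard : ((Finset.filter (fun p => p.Prime ∧ p ∈ P)
          (Finset.Ioc ⌊a⌋₊ ⌊b⌋₊)).card : ℝ) ≤ (b - a) + 1 := by
        have h1 : (Finset.filter (fun p => p.Prime ∧ p ∈ P)
            (Finset.Ioc ⌊a⌋₊ ⌊b⌋₊)).card ≤ ⌊b⌋₊ - ⌊a⌋₊ := by
          calc _ ≤ (Finset.Ioc ⌊a⌋₊ ⌊b⌋₊).card := Finset.card_filter_le _ _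
          _ = ⌊b⌋₊ - ⌊a⌋₊ := Nat.card_Ioc _ _
        have hfl : ⌊a⌋₊ ≤ ⌊b⌋₊ := Nat.floor_mono hab
        have h2 : ((⌊b⌋₊ - ⌊a⌋₊ : ℕ) : ℝ) = (⌊b⌋₊ : ℝ) - (⌊a⌋₊ : ℝ) := by
          push_cast [Nat.cast_sub hfl]; ring
        have h3 : (⌊b⌋₊ : ℝ) ≤ b := Nat.floor_le (by linarith)
        have h4 : a - 1 ≤ (⌊a⌋₊ : ℝ) := by
          have := Nat.lt_floor_add_one a
          linarith
        calc ((Finset.filter (fun p => p.Prime ∧ p ∈ P)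
            (Finset.Ioc ⌊a⌋₊ ⌊b⌋₊)).card : ℝ) ≤ ((⌊b⌋₊ - ⌊a⌋₊ : ℕ) : ℝ) := by
              exact_mod_cast h1
        _ = (⌊b⌋₊ : ℝ) - (⌊a⌋₊ : ℝ) := h2
        _ ≤ (b - a) + 1 := by linarith
      calc ‖∑ p ∈ Finset.filter (fun p => p.Prime ∧ p ∈ P) (Finset.Ioc ⌊a⌋₊ ⌊b⌋₊),
            χ p * (Real.log p : ℂ)‖
          ≤ ∑ p ∈ Finset.filter (fun p => p.Prime ∧ p ∈ P) (Finset.Ioc ⌊a⌋₊ ⌊b⌋₊),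
            ‖χ p * (Real.log p : ℂ)‖ := norm_sum_le _ _
        _ ≤ (Finset.filter (fun p => p.Prime ∧ p ∈ P) (Finset.Ioc ⌊a⌋₊ ⌊b⌋₊)).card
            • Real.log b := Finset.sum_le_card_nsmul _ _ _ hterm
        _ = ((Finset.filter (fun p => p.Prime ∧ p ∈ P)
            (Finset.Ioc ⌊a⌋₊ ⌊b⌋₊)).card : ℝ) * Real.log b := by
              rw [nsmul_eq_mul]
        _ ≤ ((b - a) + 1) * Real.log b :=
            mul_le_mul_of_nonneg_right hcard hlogb
    -- assemble
    calc ‖r b - r a‖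
        = ‖((∫ y in Ioc (1:ℝ) b, q y) - (∫ y in Ioc (1:ℝ) a, q y))
          - ((∑ p ∈ Finset.filter (fun p => p.Prime ∧ p ∈ P) (Finset.Iic ⌊b⌋₊),
              χ p * (Real.log p : ℂ))
            - (∑ p ∈ Finset.filter (fun p => p.Prime ∧ p ∈ P) (Finset.Iic ⌊a⌋₊),
              χ p * (Real.log p : ℂ)))‖ := by rw [hr a, hr b]; ring_nf
      _ = ‖(∫ y in Ioc a b, q y)
          - ∑ p ∈ Finset.filter (fun p => p.Prime ∧ p ∈ P) (Finset.Ioc ⌊a⌋₊ ⌊b⌋₊),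
              χ p * (Real.log p : ℂ)‖ := by rw [hsplit, hsum]
      _ ≤ ‖∫ y in Ioc a b, q y‖
          + ‖∑ p ∈ Finset.filter (fun p => p.Prime ∧ p ∈ P) (Finset.Ioc ⌊a⌋₊ ⌊b⌋₊),
              χ p * (Real.log p : ℂ)‖ := norm_sub_le _ _
      _ ≤ M * (b - a) + ((b - a) + 1) * Real.log b := add_le_add hI hS
  -- unfold the big-O hypotheses
  rw [Asymptotics.isBigO_iff] at hOseq ⊢
  obtain ⟨C, hC⟩ := hOseq
  rw [eventually_atTop] at hC
  obtain ⟨N, hN⟩ := hC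
  refine ⟨|C| + M + 2, ?_⟩
  rw [eventually_atTop]
  refine ⟨max (x N) 3, fun y hy => ?_⟩
  have hy3 : (3:ℝ) ≤ y := le_trans (le_max_right _ _) hy
  have hyN : x N ≤ y := le_trans (le_max_left _ _) hy
  -- find the index j with x j ≤ y < x (j+1)
  have hex : ∃ k, y < x (N + k + 1) := by
    obtain ⟨J, hJ⟩ := eventually_atTop.mp (htend.eventually_gt_atTop y)
    exact ⟨J, hJ (N + J + 1) (by omega)⟩
  set k := Nat.find hex with hk
  set j := N + k with hjdef
  have hj1 : y < x (j + 1) := Nat.find_spec hex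
  have hj2 : x j ≤ y := by
    rcases Nat.eq_zero_or_pos k with h0 | hpos
    · rw [hjdef, h0]; simpa using hyN
    · obtain ⟨m, hm⟩ := Nat.exists_eq_succ_of_ne_zero hpos.ne'
      have hmin := Nat.find_min hex (by omega : m < k)
      push_neg at hmin
      have : N + m + 1 = j := by omega
      rwa [this] at hmin
  have hxj2 : 2 ≤ x j := hx2 j
  have hy0 : (0:ℝ) < y := by linarith
  have hdiff : y - x j ≤ x j ^ ((21:ℝ)/40) := by
    have := hxsucc j
    linarith
  have hpowle : x j ^ ((21:ℝ)/40) ≤ y ^ ((21:ℝ)/40) :=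
    Real.rpow_le_rpow (by linarith) hj2 hθ0
  have hpowy1 : (1:ℝ) ≤ y ^ ((21:ℝ)/40) := le_trans (hpow1 j) hpowle
  have hpowy0 : (0:ℝ) ≤ y ^ ((21:ℝ)/40) := by linarith
  have hlogy1 : (1:ℝ) ≤ Real.log y := by
    rw [Real.le_log_iff_exp_le hy0]
    have := Real.exp_one_lt_d9
    linarith
  have hlogy0 : (0:ℝ) ≤ Real.log y := by linarith
  have hlogle : Real.log (x j) ≤ Real.log y := Real.log_le_log (by linarith) hj2
  have hlogxj0 : 0 ≤ Real.log (x j) := Real.log_nonneg (by linarith)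
  -- bound from the sequence
  have hseq : ‖r (x j)‖ ≤ |C| * (x j ^ ((21:ℝ)/40) * Real.log (x j)) := by
    have h1 := hN j (by omega)
    have h2 : ‖x j ^ ((21:ℝ)/40) * Real.log (x j)‖
        = x j ^ ((21:ℝ)/40) * Real.log (x j) :=
      Real.norm_of_nonneg (mul_nonneg (Real.rpow_nonneg (by linarith) _) hlogxj0)
    calc ‖r (x j)‖ ≤ C * ‖x j ^ ((21:ℝ)/40) * Real.log (x j)‖ := h1
    _ ≤ |C| * ‖x j ^ ((21:ℝ)/40) * Real.log (x j)‖ :=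
        mul_le_mul_of_nonneg_right (le_abs_self C) (norm_nonneg _)
    _ = |C| * (x j ^ ((21:ℝ)/40) * Real.log (x j)) := by rw [h2]
  have hkey := key (x j) y hxj2 hj2
  -- the three pieces
  have h1 : |C| * (x j ^ ((21:ℝ)/40) * Real.log (x j))
      ≤ |C| * (y ^ ((21:ℝ)/40) * Real.log y) := by
    apply mul_le_mul_of_nonneg_left _ (abs_nonneg C)
    exact mul_le_mul hpowle hlogle hlogxj0 hpowy0
  have h2 : M * (y - x j) ≤ M * (y ^ ((21:ℝ)/40) * Real.log y) := by
    apply mul_le_mul_of_nonneg_left _ hM0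
    calc y - x j ≤ y ^ ((21:ℝ)/40) := le_trans hdiff hpowle
    _ ≤ y ^ ((21:ℝ)/40) * Real.log y := le_mul_of_one_le_right hpowy0 hlogy1
  have h3 : ((y - x j) + 1) * Real.log y ≤ 2 * (y ^ ((21:ℝ)/40) * Real.log y) := by
    have hle : (y - x j) + 1 ≤ 2 * y ^ ((21:ℝ)/40) := by
      have := hpow1 j
      linarith
    calc ((y - x j) + 1) * Real.log y ≤ (2 * y ^ ((21:ℝ)/40)) * Real.log y :=
        mul_le_mul_of_nonneg_right hle hlogy0
    _ = 2 * (y ^ ((21:ℝ)/40) * Real.log y) := by ring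
  have hnorm : ‖y ^ ((21:ℝ)/40) * Real.log y‖ = y ^ ((21:ℝ)/40) * Real.log y :=
    Real.norm_of_nonneg (mul_nonneg hpowy0 hlogy0)
  have hry : ‖r y‖ ≤ ‖r (x j)‖ + ‖r y - r (x j)‖ := by
    calc ‖r y‖ = ‖r (x j) + (r y - r (x j))‖ := by ring_nf
    _ ≤ ‖r (x j)‖ + ‖r y - r (x j)‖ := norm_add_le _ _
  rw [hnorm]
  nlinarith [hry, hseq, hkey, h1, h2, h3]
end

section
/- Let 1/2 ≤ α < 1, let z₀ ∈ ℂ with α < Re z₀ < 1, and let C > 0. Then there exists n ∈ ℕ such that the function g_{z₀}(z) = 1/((z − z₀)(z − z₀ + 1)^{2n}) satisfies: (i) |g_{z₀}(z)| < C for all z with Re z > 1; (ii) g_{z₀} is analytic on {Re z > α} \ {z₀} and has a simple pole at z₀ with residue 1; (iii) |g_{z₀}(z)| < C for all z with Re z > α and |z − z₀| > 20. -/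
open Complex Filter Topology Set

/-- For `1/2 ≤ α < 1`, a point `z₀` with `α < Re z₀ < 1` and `C > 0`, there is `n ∈ ℕ` such
that `g_{z₀}(z) = 1/((z − z₀)(z − z₀ + 1)^{2n})` satisfies: (i) `|g_{z₀}(z)| < C` for
`Re z > 1`; (ii) `g_{z₀}` is analytic on `{Re z > α} \ {z₀}` with a simple pole of residue `1`
at `z₀`; (iii) `|g_{z₀}(z)| < C` for `Re z > α`, `|z − z₀| > 20`. -/
theorem exists_pole_bump (α : ℝ) (hα : 1 / 2 ≤ α) (hα1 : α < 1)
    (z₀ : ℂ) (hz₀ : α < z₀.re) (hz₀' : z₀.re < 1) (C : ℝ) (hC : 0 < C) :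
    ∃ n : ℕ,
      (∀ z : ℂ, 1 < z.re → ‖1 / ((z - z₀) * (z - z₀ + 1) ^ (2 * n))‖ < C) ∧
      AnalyticOnNhd ℂ (fun z : ℂ => 1 / ((z - z₀) * (z - z₀ + 1) ^ (2 * n)))
        ({z : ℂ | α < z.re} \ {z₀}) ∧
      Tendsto (fun z : ℂ => (z - z₀) * (1 / ((z - z₀) * (z - z₀ + 1) ^ (2 * n))))
        (𝓝[≠] z₀) (𝓝 1) ∧
      (∀ z : ℂ, α < z.re → 20 < ‖z - z₀‖ →
        ‖1 / ((z - z₀) * (z - z₀ + 1) ^ (2 * n))‖ < C) := by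
  set d : ℝ := min (1 - z₀.re) 20 with hd
  set q : ℝ := min (2 - z₀.re) 19 with hq
  have hd0 : 0 < d := lt_min (by linarith) (by norm_num)
  have hq1 : 1 < q := lt_min (by linarith) (by norm_num)
  obtain ⟨n, hn⟩ := pow_unbounded_of_one_lt (1 / (d * C)) hq1
  -- key bound
  have key : ∀ z : ℂ, d ≤ ‖z - z₀‖ → q ≤ ‖z - z₀ + 1‖ →
      ‖1 / ((z - z₀) * (z - z₀ + 1) ^ (2 * n))‖ < C := by
    intro z h1 h2
    rw [norm_div, norm_one, norm_mul, norm_pow]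
    have hq0 : (0:ℝ) < q := by linarith
    have hqn : q ^ n ≤ q ^ (2 * n) := by
      apply pow_le_pow_right₀ (le_of_lt hq1); omega
    have h3 : 1 / (d * C) < q ^ (2 * n) := lt_of_lt_of_le hn hqn
    have h4 : 1 / C < d * q ^ (2 * n) := by
      rw [div_lt_iff₀ (mul_pos hd0 hC)] at h3
      rw [div_lt_iff₀ hC]; nlinarith
    have h5 : d * q ^ (2 * n) ≤ ‖z - z₀‖ * ‖z - z₀ + 1‖ ^ (2 * n) := by
      apply mul_le_mul h1 (pow_le_pow_left₀ (le_of_lt hq0) h2 _)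
        (pow_nonneg (le_of_lt hq0) _) (norm_nonneg _)
    have h6 : 1 / C < ‖z - z₀‖ * ‖z - z₀ + 1‖ ^ (2 * n) := lt_of_lt_of_le h4 h5
    have hz0 : (0:ℝ) < ‖z - z₀‖ := lt_of_lt_of_le hd0 h1
    have hw0 : (0:ℝ) < ‖z - z₀ + 1‖ ^ (2 * n) :=
      pow_pos (lt_of_lt_of_le (by linarith) h2) _
    rw [div_lt_iff₀ (mul_pos hz0 hw0)]
    rw [div_lt_iff₀ hC] at h6
    nlinarith
  refine ⟨n, ?_, ?_, ?_, ?_⟩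
  · intro z hz
    apply key
    · refine le_trans (min_le_left _ _) ?_
      calc (1 : ℝ) - z₀.re ≤ (z - z₀).re := by simp [Complex.sub_re]; linarith
        _ ≤ ‖z - z₀‖ := Complex.re_le_norm _
    · refine le_trans (min_le_left _ _) ?_
      calc (2 : ℝ) - z₀.re ≤ (z - z₀ + 1).re := by
            simp [Complex.add_re, Complex.sub_re]; linarith
        _ ≤ ‖z - z₀ + 1‖ := Complex.re_le_norm _
  · have h1 : AnalyticOnNhd ℂ (fun z : ℂ => (z - z₀) * (z - z₀ + 1) ^ (2 * n))
        ({z : ℂ | α < z.re} \ {z₀}) := by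
      apply AnalyticOnNhd.mul
      · exact (analyticOnNhd_id).sub analyticOnNhd_const
      · exact (((analyticOnNhd_id).sub analyticOnNhd_const).add analyticOnNhd_const).pow _
    have h2 : ∀ z ∈ ({z : ℂ | α < z.re} \ {z₀}),
        (z - z₀) * (z - z₀ + 1) ^ (2 * n) ≠ 0 := by
      intro z hz
      obtain ⟨hz1, hz2⟩ := hz
      apply mul_ne_zero
      · exact sub_ne_zero.mpr hz2
      · apply pow_ne_zero
        intro h
        have : z = z₀ - 1 := by linear_combination h
        rw [this] at hz1
        simp [Complex.sub_re] at hz1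
        linarith [hz1]
    simpa only [one_div, Pi.inv_def] using h1.inv h2
  · have h1 : Tendsto (fun z : ℂ => ((z - z₀ + 1) ^ (2 * n))⁻¹) (𝓝[≠] z₀) (𝓝 1) := by
      have hc : ContinuousAt (fun z : ℂ => ((z - z₀ + 1) ^ (2 * n))⁻¹) z₀ := by
        apply ContinuousAt.inv₀ (by fun_prop)
        simp
      have := hc.tendsto.mono_left (nhdsWithin_le_nhds (s := {z₀}ᶜ))
      simpa using this
    apply h1.congr'
    filter_upwards [self_mem_nhdsWithin] with z hz
    have ha : z - z₀ ≠ 0 := sub_ne_zero.mpr hz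
    rw [one_div, mul_inv, ← mul_assoc, mul_inv_cancel₀ ha, one_mul]
  · intro z hz1 hz2
    apply key
    · exact le_trans (min_le_right _ _) (le_of_lt hz2)
    · refine le_trans (min_le_right _ _) ?_
      have := norm_sub_norm_le (z - z₀) (-1 : ℂ)
      simp only [norm_neg, norm_one, sub_neg_eq_add] at this
      linarith
end
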